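/- arXiv:1510.07643 — 2 statements merged into one kernel-verified Lean document; each statement's English description precedes it below -/
import Mathlib

section
/- Let B ∈ ℂ^{N×N} and r > 0 be such that every eigenvalue λ of B satisfies |λ| ≥ r. Then B is invertible and ‖B^{−1}‖ ≤ ‖B‖^n r^{−n−1} for every integer n ≥ N−1, where ‖·‖ denotes the operator norm of a matrix acting on ℂ^N with the Euclidean norm. -/
open MeasureTheory Complex Filter Finset
open scoped ENNReal NNReal Topology

noncomputable section

/-- Euclidean space `ℝ^d`. -/
abbrev Rd (d : ℕ) : Type := EuclideanSpace ℝ (Fin d)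
/-- Euclidean space `ℂ^N`. -/
abbrev CN (N : ℕ) : Type := EuclideanSpace ℂ (Fin N)
/-- `N × N` complex matrices. -/
abbrev Mat (N : ℕ) : Type := Matrix (Fin N) (Fin N) ℂ
/-- Space-time `ℝ × ℝ^d`. -/
abbrev STd (d : ℕ) : Type := ℝ × Rd d

/-- The operator norm of a matrix acting on `ℂ^N` with the Euclidean norm. -/
def mOpNorm {N : ℕ} (M : Mat N) : ℝ :=
  ‖(Matrix.toEuclideanCLM (𝕜 := ℂ) M : CN N →L[ℂ] CN N)‖

/-- A matrix acting on a vector of `ℂ^N`. -/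
def matVec {N : ℕ} (M : Mat N) (x : CN N) : CN N :=
  (Matrix.toEuclideanCLM (𝕜 := ℂ) M : CN N →L[ℂ] CN N) x

/-- The length `|α|` of a multiindex. -/
def deg {d : ℕ} (α : Fin d → ℕ) : ℕ := ∑ i, α i

/-- The finite set of multiindices `α` on `ℝ^d` with `|α| ≤ k`. -/
def idxLe (d k : ℕ) : Finset (Fin d → ℕ) :=
  (Finset.Icc 0 (fun _ => k)).filter (fun α => deg α ≤ k)

/-- The finite set of multiindices `α` on `ℝ^d` with `|α| = k`. -/
def idxEq (d k : ℕ) : Finset (Fin d → ℕ) :=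
  (Finset.Icc 0 (fun _ => k)).filter (fun α => deg α = k)

/-- The monomial `ξ^α`. -/
def monom {d : ℕ} (α : Fin d → ℕ) (ξ : Rd d) : ℝ := ∏ i, ξ i ^ α i

/-- The principal symbol `A_#(ξ) = ∑_{|α| = |β| = m} ξ^{α+β} a_{αβ}` of the differential
operator with (constant) coefficients `a`. -/
def pSymb (d m N : ℕ) (a : (Fin d → ℕ) → (Fin d → ℕ) → Mat N) (ξ : Rd d) : Mat N :=
  ∑ α ∈ idxEq d m, ∑ β ∈ idxEq d m, (monom (α + β) ξ : ℂ) • a α β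

/-- Membership in the open sector `Σ_θ = {z ≠ 0 : |arg z| < θ}`. -/
def inSector (θ : ℝ) (z : ℂ) : Prop := z ≠ 0 ∧ |z.arg| < θ

/-- `A ∈ Ell(θ, κ, K)`: uniform ellipticity of angle `θ`, for a `2m`-th order operator with
coefficients `a` (only the principal coefficients `|α| = |β| = m` enter the spectral condition,
and all coefficients with `|α|, |β| ≤ m` are bounded by `K`). -/
def EllSec (d m N : ℕ) (θ κ K : ℝ) (a : (Fin d → ℕ) → (Fin d → ℕ) → Mat N) : Prop :=
  (∀ α ∈ idxEq d m, ∀ β ∈ idxEq d m, mOpNorm (a α β) ≤ K) ∧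
  ∀ ξ : Rd d, ‖ξ‖ = 1 → ∀ z ∈ spectrum ℂ (pSymb d m N a ξ),
    inSector θ z ∧ κ ≤ ‖z‖

/-- `A ∈ Ell^{LH}(κ, K)`: the Legendre–Hadamard ellipticity condition
`Re ⟨x, A_#(ξ) x⟩ ≥ κ ‖x‖²` for `|ξ| = 1`, together with the bound `‖a_{αβ}‖ ≤ K`
for all coefficients with `|α|, |β| ≤ m`. -/
def EllLH (d m N : ℕ) (κ K : ℝ) (a : (Fin d → ℕ) → (Fin d → ℕ) → Mat N) : Prop :=
  (∀ α ∈ idxLe d m, ∀ β ∈ idxLe d m, mOpNorm (a α β) ≤ K) ∧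
  ∀ ξ : Rd d, ‖ξ‖ = 1 → ∀ x : CN N,
    κ * ‖x‖ ^ 2 ≤ (inner ℂ x (matVec (pSymb d m N a ξ) x) : ℂ).re

/-- `Ell^{LH}(κ, K)` for a homogeneous operator (only principal coefficients). -/
def EllLHhom (d m N : ℕ) (κ K : ℝ) (a : (Fin d → ℕ) → (Fin d → ℕ) → Mat N) : Prop :=
  (∀ α ∈ idxEq d m, ∀ β ∈ idxEq d m, mOpNorm (a α β) ≤ K) ∧
  ∀ ξ : Rd d, ‖ξ‖ = 1 → ∀ x : CN N,
    κ * ‖x‖ ^ 2 ≤ (inner ℂ x (matVec (pSymb d m N a ξ) x) : ℂ).re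

/-- The axis-parallel cube with center `c` and side length `r`. -/
def cube (d : ℕ) (c : Rd d) (r : ℝ) : Set (Rd d) := {x | ∀ i, |x i - c i| ≤ r / 2}

/-- The Muckenhoupt `A_p` characteristic `[w]_{A_p}` of a weight on `ℝ^d`. -/
def apConstE (d : ℕ) (p : ℝ) (w : Rd d → ℝ) : ℝ≥0∞ :=
  ⨆ (c : Rd d) (r : ℝ) (_ : 0 < r),
    ((∫⁻ x in cube d c r, ENNReal.ofReal (w x)) / ENNReal.ofReal (r ^ d)) *
      ((∫⁻ x in cube d c r, ENNReal.ofReal (w x ^ (-1 / (p - 1)))) /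
        ENNReal.ofReal (r ^ d)) ^ (p - 1)

/-- `w` is an `A_p` weight on `ℝ^d`. -/
def IsApE (d : ℕ) (p : ℝ) (w : Rd d → ℝ) : Prop :=
  Measurable w ∧ (∀ x, 0 < w x) ∧ apConstE d p w < ⊤

/-- The Muckenhoupt `A_p` characteristic `[v]_{A_p}` of a weight on `ℝ`. -/
def apConstR (p : ℝ) (v : ℝ → ℝ) : ℝ≥0∞ :=
  ⨆ (c : ℝ) (r : ℝ) (_ : 0 < r),
    ((∫⁻ t in Set.Icc c (c + r), ENNReal.ofReal (v t)) / ENNReal.ofReal r) *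
      ((∫⁻ t in Set.Icc c (c + r), ENNReal.ofReal (v t ^ (-1 / (p - 1)))) /
        ENNReal.ofReal r) ^ (p - 1)

/-- `v` is an `A_p` weight on `ℝ`. -/
def IsApR (p : ℝ) (v : ℝ → ℝ) : Prop :=
  Measurable v ∧ (∀ t, 0 < v t) ∧ apConstR p v < ⊤

/-- The measure `w(x) dx` on `ℝ^d`. -/
def wMeasE (d : ℕ) (w : Rd d → ℝ) : Measure (Rd d) :=
  volume.withDensity fun x => ENNReal.ofReal (w x)

/-- The measure `v(t) dt` on `ℝ`. -/
def wMeasR (v : ℝ → ℝ) : Measure ℝ := volume.withDensity fun t => ENNReal.ofReal (v t)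

/-- The norm of `L^q(ℝ^d, w; ℂ^N)`. -/
def nLq {d : ℕ} {E : Type*} [NormedAddCommGroup E] (q : ℝ) (w : Rd d → ℝ) (f : Rd d → E) :
    ℝ≥0∞ :=
  (∫⁻ x, (‖f x‖₊ : ℝ≥0∞) ^ q ∂(wMeasE d w)) ^ (1 / q)

/-- The norm of `L^p(ℝ, v; L^q(ℝ^d, w; ℂ^N))` for a function on space-time. -/
def nLpLq {d : ℕ} {E : Type*} [NormedAddCommGroup E] (p q : ℝ) (v : ℝ → ℝ) (w : Rd d → ℝ)
    (u : STd d → E) : ℝ≥0∞ :=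
  (∫⁻ t, ((∫⁻ x, (‖u (t, x)‖₊ : ℝ≥0∞) ^ q ∂(wMeasE d w)) ^ (1 / q)) ^ p ∂(wMeasR v)) ^ (1 / p)

variable {E : Type*}

/-- Partial derivative `∂_i` on `ℝ^d`. -/
def pder {d : ℕ} [NormedAddCommGroup E] [NormedSpace ℝ E] (i : Fin d) (f : Rd d → E) :
    Rd d → E :=
  fun x => fderiv ℝ f x (EuclideanSpace.single i (1 : ℝ))

/-- Iterated partial derivative `∂^γ` on `ℝ^d`. -/
def pderM {d : ℕ} [NormedAddCommGroup E] [NormedSpace ℝ E] (γ : Fin d → ℕ) (f : Rd d → E) :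
    Rd d → E :=
  (List.finRange d).foldr (fun i g => (pder i)^[γ i] g) f

/-- Time derivative `∂_t` on space-time `ℝ × ℝ^d`. -/
def pdt {d : ℕ} [NormedAddCommGroup E] [NormedSpace ℝ E] (f : STd d → E) : STd d → E :=
  fun z => fderiv ℝ f z (1, 0)

/-- Spatial partial derivative `∂_{x_i}` on space-time `ℝ × ℝ^d`. -/
def pdx {d : ℕ} [NormedAddCommGroup E] [NormedSpace ℝ E] (i : Fin d) (f : STd d → E) :
    STd d → E :=
  fun z => fderiv ℝ f z (0, EuclideanSpace.single i (1 : ℝ))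

/-- Iterated spatial partial derivative `∂_x^γ` on space-time. -/
def pdxM {d : ℕ} [NormedAddCommGroup E] [NormedSpace ℝ E] (γ : Fin d → ℕ) (f : STd d → E) :
    STd d → E :=
  (List.finRange d).foldr (fun i g => (pdx i)^[γ i] g) f

/-- A (scalar-valued) test function: smooth and compactly supported. -/
def IsTest {V : Type*} [NormedAddCommGroup V] [NormedSpace ℝ V] (φ : V → ℂ) : Prop :=
  ContDiff ℝ (⊤ : ℕ∞) φ ∧ HasCompactSupport φ

/-- A vector-valued test function: smooth and compactly supported. -/
def IsTestV {V : Type*} [NormedAddCommGroup V] [NormedSpace ℝ V] {N : ℕ} (φ : V → CN N) : Prop :=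
  ContDiff ℝ (⊤ : ℕ∞) φ ∧ HasCompactSupport φ

/-- `g = ∂^γ f` in the sense of distributions on `ℝ^d`. -/
def HasWDx {d N : ℕ} (γ : Fin d → ℕ) (f g : Rd d → CN N) : Prop :=
  ∀ φ : Rd d → ℂ, IsTest φ →
    ∫ x, pderM γ φ x • f x = ((-1 : ℂ) ^ deg γ) • ∫ x, φ x • g x

/-- `g = ∂_t^k ∂_x^γ u` in the sense of distributions on space-time `ℝ × ℝ^d`. -/
def HasWDst {d N : ℕ} (k : ℕ) (γ : Fin d → ℕ) (u g : STd d → CN N) : Prop :=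
  ∀ φ : STd d → ℂ, IsTest φ →
    ∫ z, pdt^[k] (pdxM γ φ) z • u z = ((-1 : ℂ) ^ (k + deg γ)) • ∫ z, φ z • g z

/-- `u'` is the weak derivative of the (Banach space valued) function `u` on `(s, T)`. -/
def HasWDt {Y : Type*} [NormedAddCommGroup Y] [NormedSpace ℝ Y] (s T : ℝ) (u u' : ℝ → Y) :
    Prop :=
  ∀ φ : ℝ → ℝ, ContDiff ℝ (⊤ : ℕ∞) φ → HasCompactSupport φ →
    Function.support φ ⊆ Set.Ioo s T →
    ∫ t in Set.Ioo s T, deriv φ t • u t = - ∫ t in Set.Ioo s T, φ t • u' t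

/-- The bilinear pairing `⟨x, y⟩ = ∑ x_i y_i` on `ℂ^N`. -/
def bpair {N : ℕ} (x y : CN N) : ℂ := ∑ i, x i * y i

/-- `u` lies in the weighted Sobolev space `W^{k,q}(ℝ^d, w; ℂ^N)`, with the family `g`
witnessing its distributional derivatives: `g γ = ∂^γ u ∈ L^q(ℝ^d, w; ℂ^N)` for `|γ| ≤ k`. -/
def SobClass (d N k : ℕ) (q : ℝ) (w : Rd d → ℝ) (u : Rd d → CN N)
    (g : (Fin d → ℕ) → Rd d → CN N) : Prop :=
  g 0 = u ∧ ∀ γ ∈ idxLe d k,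
    AEStronglyMeasurable (g γ) volume ∧ nLq q w (g γ) < ⊤ ∧ HasWDx γ u (g γ)

/-- The homogeneous operator `A u = ∑_{|α|=|β|=m} a_{αβ} D^α D^β u` evaluated using the
derivative witnesses `g` (note `D^α D^β = (-1)^m ∂^{α+β}` for `|α| = |β| = m`). -/
def applyAconst (d m N : ℕ) (a : (Fin d → ℕ) → (Fin d → ℕ) → Mat N)
    (g : (Fin d → ℕ) → Rd d → CN N) (x : Rd d) : CN N :=
  ∑ α ∈ idxEq d m, ∑ β ∈ idxEq d m, ((-1 : ℂ) ^ m) • matVec (a α β) (g (α + β) x)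

/-- The weighted Lebesgue space `X₀ = L^q(ℝ^d, w; ℂ^N)` as a type. -/
abbrev X0 (d N : ℕ) (q : ℝ) (w : Rd d → ℝ) : Type :=
  Lp (CN N) (ENNReal.ofReal q) (wMeasE d w)

/-- An element `u` of `X₀` lies in `X₁ = W^{2m,q}(ℝ^d, w; ℂ^N)`, with derivative witnesses
`g γ ∈ X₀`, `|γ| ≤ k`. -/
def MemSob (d N : ℕ) (k : ℕ) (q : ℝ) (w : Rd d → ℝ) (u : X0 d N q w)
    (g : (Fin d → ℕ) → X0 d N q w) : Prop :=
  g 0 = u ∧ ∀ γ ∈ idxLe d k, HasWDx γ (↑u) (↑(g γ))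

/-- The operator `A(t) u = ∑_{|α|=|β|=m} a_{αβ}(t) D^α D^β u` with `x`-independent
coefficients, as a map on `X₀` through the derivative witnesses `g`. -/
def applyAt (d m N : ℕ) (q : ℝ) (w : Rd d → ℝ) [Fact (1 ≤ ENNReal.ofReal q)]
    (a : ℝ → (Fin d → ℕ) → (Fin d → ℕ) → Mat N) (t : ℝ)
    (g : (Fin d → ℕ) → X0 d N q w) : X0 d N q w :=
  ∑ α ∈ idxEq d m, ∑ β ∈ idxEq d m,
    ((-1 : ℂ) ^ m) • ((Matrix.toEuclideanCLM (𝕜 := ℂ) (a t α β) :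
        CN N →L[ℂ] CN N).compLp (g (α + β)))

/-- `S(t,s)`, `s ≤ t`, is a strongly continuous evolution family on
`X₀ = L^q(ℝ^d, w; ℂ^N)` for the operators `A(t) = ∑_{|α|=|β|=m} a_{αβ}(t) D^α D^β`
with domain `X₁ = W^{2m,q}(ℝ^d, w; ℂ^N)` (Definition 2.1): (i) the algebraic evolution laws;
(ii) strong continuity; (iii) for `x ∈ X₁`, `t ↦ S(t,s)x` lies in
`L¹(s,T;X₁) ∩ W^{1,1}(s,T;X₀)` and solves `u' + A(t)u = 0`; (iv) for `x ∈ X₁`,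
`s ↦ S(t,s)x` lies in `W^{1,1}(T,t;X₀)` and solves `u'(s) = S(t,s)A(s)x`. -/
def IsEvoFam (d m N : ℕ) (q : ℝ) (w : Rd d → ℝ) [Fact (1 ≤ ENNReal.ofReal q)]
    (a : ℝ → (Fin d → ℕ) → (Fin d → ℕ) → Mat N)
    (S : ℝ → ℝ → (X0 d N q w →L[ℂ] X0 d N q w)) : Prop :=
  (∀ s, S s s = ContinuousLinearMap.id ℂ (X0 d N q w)) ∧
  (∀ s r t : ℝ, s ≤ r → r ≤ t → (S t r).comp (S r s) = S t s) ∧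
  (∀ x : X0 d N q w,
    ContinuousOn (fun p : ℝ × ℝ => S p.1 p.2 x) {p : ℝ × ℝ | p.2 ≤ p.1}) ∧
  (∀ s T : ℝ, s < T → ∀ (x : X0 d N q w) (gx : (Fin d → ℕ) → X0 d N q w),
    MemSob d N (2*m) q w x gx →
    ∃ G : ℝ → (Fin d → ℕ) → X0 d N q w,
      (∀ γ ∈ idxLe d (2*m), IntegrableOn (fun t => G t γ) (Set.Ioo s T) volume) ∧
      (∀ᵐ t ∂(volume.restrict (Set.Ioo s T)), MemSob d N (2*m) q w (S t s x) (G t)) ∧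
      IntegrableOn (fun t => applyAt d m N q w a t (G t)) (Set.Ioo s T) volume ∧
      HasWDt s T (fun t => S t s x) (fun t => - applyAt d m N q w a t (G t))) ∧
  (∀ t T : ℝ, T < t → ∀ (x : X0 d N q w) (gx : (Fin d → ℕ) → X0 d N q w),
    MemSob d N (2*m) q w x gx →
      IntegrableOn (fun s => S t s (applyAt d m N q w a s gx)) (Set.Ioo T t) volume ∧
      HasWDt T t (fun s => S t s x) (fun s => S t s (applyAt d m N q w a s gx)))

/-- `N × N` complex matrices as a Pi type (so that the sup-norm/`fderiv` machinery applies);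
definitionally equal to `Mat N`. -/
abbrev MatP (N : ℕ) : Type := Fin N → Fin N → ℂ

/-- Matrix multiplication on `MatP`. -/
def mMul {N : ℕ} (A B : MatP N) : MatP N := fun i j => ∑ l, A i l * B l j

/-- The full non-divergence form operator
`A(t)u(x) = ∑_{|α| ≤ m, |β| ≤ m} a_{αβ}(t,x) D^α D^β u(x)` (with `D = -i ∇`), evaluated on
space-time using the spatial derivative witnesses `g γ = ∂^γ u`. -/
def applyAtx (d m N : ℕ) (a : ℝ → Rd d → (Fin d → ℕ) → (Fin d → ℕ) → Mat N)
    (g : (Fin d → ℕ) → STd d → CN N) (z : STd d) : CN N :=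
  ∑ α ∈ idxLe d m, ∑ β ∈ idxLe d m,
    ((-Complex.I) ^ (deg α + deg β)) • matVec (a z.1 z.2 α β) (g (α + β) z)

/-- `u ∈ L^p(ℝ, v; W^{k,q}(ℝ^d, w; ℂ^N))`, with `g` witnessing the spatial distributional
derivatives `g γ = ∂_x^γ u` for `|γ| ≤ k`, all belonging to `L^p(ℝ, v; L^q(ℝ^d, w; ℂ^N))`
(and in particular locally integrable on space-time). -/
def SobClassST (d N k : ℕ) (p q : ℝ) (v : ℝ → ℝ) (w : Rd d → ℝ) (u : STd d → CN N)
    (g : (Fin d → ℕ) → STd d → CN N) : Prop :=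
  g 0 = u ∧ ∀ γ ∈ idxLe d k,
    AEStronglyMeasurable (g γ) volume ∧ LocallyIntegrable (g γ) volume ∧
      nLpLq p q v w (g γ) < ⊤ ∧ HasWDst 0 γ u (g γ)

section Statement4Aux

open Matrix Polynomial in
lemma aux_spec_mem {N : ℕ} (B : Mat N) {μ : ℂ} (h : μ ∈ B.charpoly.roots) :
    μ ∈ spectrum ℂ B := by
  rw [Polynomial.mem_roots'] at h
  rw [spectrum.mem_iff]
  intro hu
  rw [Matrix.isUnit_iff_isUnit_det, isUnit_iff_ne_zero] at hu
  apply hu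
  have hmap : (Matrix.charmatrix B).map (Polynomial.eval μ) = algebraMap ℂ (Mat N) μ - B := by
    ext i j
    by_cases hij : i = j
    · subst hij
      simp [Matrix.charmatrix_apply_eq, Matrix.algebraMap_matrix_apply]
    · simp [Matrix.charmatrix_apply_ne _ _ _ hij, Matrix.algebraMap_matrix_apply, hij]
  have := (RingHom.map_det (Polynomial.evalRingHom μ) (Matrix.charmatrix B)).symm
  simp only [RingHom.mapMatrix_apply] at this
  have hm : ((Matrix.charmatrix B).map (Polynomial.evalRingHom μ)).det = B.charpoly.eval μ := by
    rw [this]; rfl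
  rw [show ((Matrix.charmatrix B).map (Polynomial.evalRingHom μ) :
      Mat N) = (Matrix.charmatrix B).map (Polynomial.eval μ) from rfl, hmap] at hm
  rw [hm, h.2]

open Matrix Polynomial in
lemma aux_pow_le {s : Multiset ℝ} {r : ℝ} (hr : 0 ≤ r) (h : ∀ x ∈ s, r ≤ x) :
    r ^ Multiset.card s ≤ s.prod := by
  induction s using Multiset.induction with
  | empty => simp
  | cons a t ih =>
    simp only [Multiset.card_cons, Multiset.prod_cons, pow_succ']
    have ha := h a (Multiset.mem_cons_self a t)
    have ht := ih (fun x hx => h x (Multiset.mem_cons_of_mem hx))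
    exact mul_le_mul ha ht (pow_nonneg hr _) (hr.trans ha)

lemma aux_card_roots {N : ℕ} (B : Mat N) : Multiset.card B.charpoly.roots = N := by
  rw [(Polynomial.splits_iff_card_roots).1 (IsAlgClosed.splits _),
    Matrix.charpoly_natDegree_eq_dim, Fintype.card_fin]

lemma aux_det {N : ℕ} (B : Mat N) {r : ℝ} (hr : 0 < r)
    (hspec : ∀ z ∈ spectrum ℂ B, r ≤ ‖z‖) : r ^ N ≤ ‖B.det‖ := by
  rw [Matrix.det_eq_prod_roots_charpoly]
  calc r ^ N = r ^ Multiset.card (B.charpoly.roots.map (fun z => ‖z‖)) := by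
        rw [Multiset.card_map, aux_card_roots]
    _ ≤ (B.charpoly.roots.map (fun z => ‖z‖)).prod := by
        refine aux_pow_le hr.le ?_
        intro x hx
        obtain ⟨z, hz, rfl⟩ := Multiset.mem_map.1 hx
        exact hspec z (aux_spec_mem B hz)
    _ = ‖(B.charpoly.roots).prod‖ :=
        (map_multiset_prod (normHom : ℂ →*₀ ℝ) _).symm

open Matrix Polynomial in
lemma aux_key {N : ℕ} (hN : 0 < N) (B : Mat N) (x : CN N) :
    ‖B.det‖ * ‖x‖ ≤
      mOpNorm B ^ (N - 1) * ‖(Matrix.toEuclideanCLM (𝕜 := ℂ) B : CN N →L[ℂ] CN N) x‖ := by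
  set T : CN N →L[ℂ] CN N := Matrix.toEuclideanCLM (𝕜 := ℂ) B with hT
  set P : Mat N := Bᴴ * B with hPdef
  have hP : P.IsHermitian := Matrix.isHermitian_conjTranspose_mul_self B
  set μ : Fin N → ℝ := hP.eigenvalues with hμ
  have hμ0 : ∀ i, 0 ≤ μ i := Matrix.eigenvalues_conjTranspose_mul_self_nonneg B
  set S : CN N →L[ℂ] CN N := Matrix.toEuclideanCLM (𝕜 := ℂ) P with hS
  set b := hP.eigenvectorBasis with hb
  -- S = star T * T
  have hST : S = star T * T := by
    rw [hS, hPdef, ← Matrix.star_eq_conjTranspose, _root_.map_mul, map_star]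
  -- ⟪y, S y⟫.re = ‖T y‖²
  have hTsq : ∀ y : CN N, ((inner ℂ y (S y) : ℂ)).re = ‖T y‖ ^ 2 := by
    intro y
    rw [hST]
    simp only [ContinuousLinearMap.mul_apply]
    rw [ContinuousLinearMap.star_eq_adjoint, ContinuousLinearMap.adjoint_inner_right,
      inner_self_eq_norm_sq_to_K]
    simp [← Complex.ofReal_pow]
  -- eigen action
  have hSb : ∀ i, S (b i) = (μ i : ℂ) • b i := by
    intro i
    have h := hP.mulVec_eigenvectorBasis i
    apply (WithLp.equiv 2 (Fin N → ℂ)).injective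
    rw [WithLp.equiv_apply, WithLp.equiv_apply, hS, Matrix.ofLp_toEuclideanCLM]
    funext j
    have hj := congrFun h j
    rw [WithLp.ofLp_smul]
    show (P *ᵥ _) j = ((μ i : ℂ) • (⇑(b i) : Fin N → ℂ)) j
    rw [hj]
    simp [Pi.smul_apply, Complex.real_smul]
    rfl
  -- S is self-adjoint
  have hSsa : ContinuousLinearMap.adjoint S = S := by
    rw [← ContinuousLinearMap.star_eq_adjoint, hST]
    rw [StarMul.star_mul, star_star]
  -- repr action
  have hrepr : ∀ (y : CN N) (i : Fin N), b.repr (S y) i = (μ i : ℂ) * b.repr y i := by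
    intro y i
    rw [OrthonormalBasis.repr_apply_apply, OrthonormalBasis.repr_apply_apply,
      ← ContinuousLinearMap.adjoint_inner_left S, hSsa, hSb, inner_smul_left]
    simp [Complex.conj_ofReal]
  -- inner via repr
  have hinner_sum : ∀ y : CN N,
      ((inner ℂ y (S y) : ℂ)).re = ∑ i, μ i * Complex.normSq (b.repr y i) := by
    intro y
    rw [← b.repr.inner_map_map y (S y)]
    rw [PiLp.inner_apply]
    rw [Complex.re_sum]
    refine Finset.sum_congr rfl fun i _ => ?_
    rw [hrepr]
    simp only [RCLike.inner_apply]
    rw [show (μ i : ℂ) * b.repr y i * (starRingEnd ℂ) (b.repr y i)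
        = (μ i : ℂ) * ((starRingEnd ℂ) (b.repr y i) * b.repr y i) by ring]
    rw [← Complex.normSq_eq_conj_mul_self]
    simp [Complex.ofReal_mul]
  -- norm via repr
  have hnorm_sum : ∀ y : CN N, ‖y‖ ^ 2 = ∑ i, Complex.normSq (b.repr y i) := by
    intro y
    rw [← b.repr.norm_map y]
    rw [EuclideanSpace.norm_eq]
    rw [Real.sq_sqrt (by positivity)]
    refine Finset.sum_congr rfl fun i _ => ?_
    rw [Complex.sq_norm]
  -- minimal eigenvalue
  obtain ⟨i₀, -, hi₀⟩ := Finset.exists_min_image Finset.univ μ ⟨⟨0, hN⟩, Finset.mem_univ _⟩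
  -- Rayleigh quotient bound
  have hray : ∀ y : CN N, μ i₀ * ‖y‖ ^ 2 ≤ ‖T y‖ ^ 2 := by
    intro y
    rw [← hTsq, hinner_sum, hnorm_sum, Finset.mul_sum]
    refine Finset.sum_le_sum fun i _ => ?_
    exact mul_le_mul_of_nonneg_right (hi₀ i (Finset.mem_univ i)) (Complex.normSq_nonneg _)
  have hb1 : ∀ i, ‖b i‖ = 1 := fun i => b.orthonormal.1 i
  -- each eigenvalue is at most ‖T‖²
  have hμle : ∀ i, μ i ≤ mOpNorm B ^ 2 := by
    intro i
    have h1 : μ i = ‖T (b i)‖ ^ 2 := by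
      rw [← hTsq, hSb, inner_smul_right, inner_self_eq_norm_sq_to_K, hb1]
      simp
    rw [h1]
    calc ‖T (b i)‖ ^ 2 ≤ (‖T‖ * ‖b i‖) ^ 2 :=
          pow_le_pow_left₀ (norm_nonneg _) (T.le_opNorm (b i)) 2
      _ = mOpNorm B ^ 2 := by rw [hb1, mul_one]; rfl
  -- determinant identity
  have hdet : ‖B.det‖ ^ 2 = ∏ i, μ i := by
    have h1 : (P.det : ℂ) = ∏ i, (μ i : ℂ) := hP.det_eq_prod_eigenvalues
    have h2 : P.det = ((Complex.normSq B.det : ℝ) : ℂ) := by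
      rw [hPdef, Matrix.det_mul, Matrix.det_conjTranspose,
        Complex.normSq_eq_conj_mul_self]
      rfl
    rw [h2, ← Complex.ofReal_prod] at h1
    have h3 : Complex.normSq B.det = ∏ i, μ i := Complex.ofReal_inj.1 h1
    rw [Complex.sq_norm, h3]
  -- assemble
  refine le_of_pow_le_pow_left₀ two_ne_zero (mul_nonneg (pow_nonneg (norm_nonneg _) _) (norm_nonneg _)) ?_
  rw [mul_pow, mul_pow, hdet]
  have hsplit : ∏ i, μ i = μ i₀ * ∏ i ∈ Finset.univ.erase i₀, μ i :=
    (Finset.mul_prod_erase Finset.univ μ (Finset.mem_univ i₀)).symm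
  have hprod : ∏ i ∈ Finset.univ.erase i₀, μ i ≤ (mOpNorm B ^ 2) ^ (N - 1) := by
    calc ∏ i ∈ Finset.univ.erase i₀, μ i
        ≤ ∏ _i ∈ Finset.univ.erase i₀, mOpNorm B ^ 2 :=
          Finset.prod_le_prod (fun i _ => hμ0 i) (fun i _ => hμle i)
      _ = (mOpNorm B ^ 2) ^ (Finset.univ.erase i₀).card := (Finset.prod_const _)
      _ = (mOpNorm B ^ 2) ^ (N - 1) := by
          rw [Finset.card_erase_of_mem (Finset.mem_univ _), Finset.card_univ, Fintype.card_fin]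
  have h0T : (0:ℝ) ≤ mOpNorm B := norm_nonneg _
  calc (∏ i, μ i) * ‖x‖ ^ 2 = (∏ i ∈ Finset.univ.erase i₀, μ i) * (μ i₀ * ‖x‖ ^ 2) := by
        rw [hsplit]; ring
    _ ≤ (mOpNorm B ^ 2) ^ (N - 1) * ‖T x‖ ^ 2 := by
        refine mul_le_mul hprod (hray x) ?_ (by positivity)
        have := hμ0 i₀
        positivity
    _ = (mOpNorm B ^ (N - 1)) ^ 2 * ‖T x‖ ^ 2 := by rw [← pow_mul, ← pow_mul, Nat.mul_comm]

end Statement4Aux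

/-- If every eigenvalue `λ` of `B ∈ ℂ^{N×N}` satisfies `|λ| ≥ r > 0`, then `B`
is invertible and `‖B⁻¹‖ ≤ ‖B‖ⁿ r^{-n-1}` for every integer `n ≥ N - 1`, where `‖·‖` is the
operator norm on `ℂ^N` with the Euclidean norm. -/

theorem statement_4 (N : ℕ) (hN : 0 < N) (B : Mat N) (r : ℝ) (hr : 0 < r)
    (hspec : ∀ z ∈ spectrum ℂ B, r ≤ ‖z‖) :
    IsUnit B ∧ ∀ n : ℕ, N - 1 ≤ n →
      mOpNorm B⁻¹ ≤ mOpNorm B ^ n * r ^ (-(n : ℝ) - 1) := by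
  have hdet : r ^ N ≤ ‖B.det‖ := aux_det B hr hspec
  have hrN : (0:ℝ) < r ^ N := pow_pos hr N
  have habs : 0 < ‖B.det‖ := lt_of_lt_of_le hrN hdet
  have hdet0 : B.det ≠ 0 := by
    intro h
    rw [h] at habs
    simp at habs
  have hdetU : IsUnit B.det := isUnit_iff_ne_zero.2 hdet0
  have hU : IsUnit B := (Matrix.isUnit_iff_isUnit_det B).2 hdetU
  refine ⟨hU, ?_⟩
  intro n hn
  set T : CN N →L[ℂ] CN N := Matrix.toEuclideanCLM (𝕜 := ℂ) B with hT
  set T' : CN N →L[ℂ] CN N := Matrix.toEuclideanCLM (𝕜 := ℂ) B⁻¹ with hT'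
  have hTT' : ∀ y : CN N, T (T' y) = y := by
    intro y
    have h1 : B * B⁻¹ = 1 := Matrix.mul_nonsing_inv B hdetU
    have h2 : T * T' = 1 := by rw [hT, hT', ← _root_.map_mul, h1, map_one]
    have h3 := congrFun (congrArg DFunLike.coe h2) y
    simpa [ContinuousLinearMap.mul_apply] using h3
  -- the main operator norm bound
  have hbound : mOpNorm B⁻¹ ≤ mOpNorm B ^ (N - 1) / ‖B.det‖ := by
    rw [show mOpNorm B⁻¹ = ‖T'‖ from rfl]
    refine ContinuousLinearMap.opNorm_le_bound _
      (div_nonneg (pow_nonneg (norm_nonneg _) _) habs.le) ?_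
    intro y
    have hkey := aux_key hN B (T' y)
    rw [hTT' y] at hkey
    rw [div_mul_eq_mul_div, le_div_iff₀ habs]
    linarith [hkey]
  -- r is at most the operator norm of B
  have hspecT : r ≤ mOpNorm B := by
    obtain ⟨z, hz⟩ : ∃ z, z ∈ B.charpoly.roots := by
      refine Multiset.exists_mem_of_ne_zero fun h0 => ?_
      have hc := aux_card_roots B
      rw [h0] at hc
      simp at hc
      omega
    have hzs : z ∈ spectrum ℂ B := aux_spec_mem B hz
    haveI : Nontrivial (CN N) := by
      refine ⟨⟨EuclideanSpace.single ⟨0, hN⟩ (1:ℂ), 0, fun h => ?_⟩⟩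
      have h1 := congrArg (fun v : CN N => v ⟨0, hN⟩) h
      simp [EuclideanSpace.single_apply] at h1
    have hz2 : z ∈ spectrum ℂ T := by
      rw [hT, AlgEquiv.spectrum_eq (Matrix.toEuclideanCLM (𝕜 := ℂ) (n := Fin N)) B]
      exact hzs
    calc r ≤ ‖z‖ := hspec z hzs
      _ = ‖z‖ := rfl
      _ ≤ ‖T‖ := spectrum.norm_le_norm_of_mem hz2
  have hT0 : 0 < mOpNorm B := lt_of_lt_of_le hr hspecT
  set k := n - (N - 1) with hk
  have hn' : n = (N - 1) + k := by omega
  have hNk : n + 1 = N + k := by omega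
  have hrpow : r ^ (-(n : ℝ) - 1) = (r ^ (n + 1) : ℝ)⁻¹ := by
    rw [show (-(n:ℝ) - 1) = -(((n+1 : ℕ) : ℝ)) by push_cast; ring]
    rw [Real.rpow_neg hr.le, Real.rpow_natCast]
  calc mOpNorm B⁻¹ ≤ mOpNorm B ^ (N - 1) / ‖B.det‖ := hbound
    _ ≤ mOpNorm B ^ (N - 1) / r ^ N := by
        apply div_le_div_of_nonneg_left (pow_nonneg hT0.le _) hrN hdet
    _ ≤ mOpNorm B ^ n / r ^ (n + 1) := by
        rw [div_le_div_iff₀ hrN (pow_pos hr _), hn',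
          show N - 1 + k + 1 = N + k by omega, pow_add, pow_add]
        have hk' : r ^ k ≤ mOpNorm B ^ k := pow_le_pow_left₀ hr.le hspecT k
        calc mOpNorm B ^ (N - 1) * (r ^ N * r ^ k)
            = (mOpNorm B ^ (N - 1) * r ^ N) * r ^ k := by ring
          _ ≤ (mOpNorm B ^ (N - 1) * r ^ N) * mOpNorm B ^ k :=
              mul_le_mul_of_nonneg_left hk'
                (mul_nonneg (pow_nonneg hT0.le _) hrN.le)
          _ = mOpNorm B ^ (N - 1) * mOpNorm B ^ k * r ^ N := by ring
    _ = mOpNorm B ^ n * r ^ (-(n : ℝ) - 1) := by rw [hrpow, div_eq_mul_inv]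
end
end

section
/- Let 0 < θ₀ < θ < π, set b = |cos(θ−θ₀)| and ε = √((1−b)/2). Then for every λ ∈ ℂ\{0} with |arg λ| ≤ π−θ and every μ ∈ ℂ with μ = 0 or |arg μ| ≤ θ₀, one has |λ + μ| ≥ ε(|λ| + |μ|). -/
open MeasureTheory Complex Filter Finset
open scoped ENNReal NNReal Topology

noncomputable section

variable {E : Type*}

/-- For `0 < θ₀ < θ < π`, `b = |cos(θ - θ₀)|` and `ε = √((1-b)/2)`, every
`λ ≠ 0` with `|arg λ| ≤ π - θ` and every `μ` with `μ = 0` or `|arg μ| ≤ θ₀` satisfy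
`|λ + μ| ≥ ε (|λ| + |μ|)`. -/
theorem statement_5 (θ₀ θ : ℝ) (hθ₀ : 0 < θ₀) (hθ : θ₀ < θ) (hθπ : θ < Real.pi)
    (lam μ : ℂ) (hlam : lam ≠ 0) (hargl : |lam.arg| ≤ Real.pi - θ)
    (hμ : μ = 0 ∨ |μ.arg| ≤ θ₀) :
    Real.sqrt ((1 - |Real.cos (θ - θ₀)|) / 2) * (‖lam‖ + ‖μ‖)
      ≤ ‖lam + μ‖ := by
  set b := |Real.cos (θ - θ₀)| with hbdef
  have hb0 : 0 ≤ b := abs_nonneg _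
  have hb1 : b ≤ 1 := Real.abs_cos_le_one _
  have hε0 : (0:ℝ) ≤ (1 - b) / 2 := by linarith
  rcases hμ with h0 | hargμ
  · subst h0
    simp only [map_zero, norm_zero, add_zero]
    have : Real.sqrt ((1 - b) / 2) ≤ 1 := Real.sqrt_le_one.mpr (by linarith)
    nlinarith [norm_nonneg lam, Real.sqrt_nonneg ((1-b)/2)]
  · set l := ‖lam‖ with hl
    set m := ‖μ‖ with hm
    have hl0 : 0 ≤ l := norm_nonneg _
    have hm0 : 0 ≤ m := norm_nonneg _
    -- real part of lam * conj μ
    have h1 := Complex.norm_mul_cos_arg lam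
    have h2 := Complex.norm_mul_sin_arg lam
    have h3 := Complex.norm_mul_cos_arg μ
    have h4 := Complex.norm_mul_sin_arg μ
    have hre : (lam * (starRingEnd ℂ) μ).re
        = l * m * Real.cos (lam.arg - μ.arg) := by
      rw [Real.cos_sub, Complex.mul_re, Complex.conj_re, Complex.conj_im]
      rw [← h1, ← h2, ← h3, ← h4]; ring
    -- angle bound
    have habs : |lam.arg - μ.arg| ≤ Real.pi - (θ - θ₀) := by
      have := abs_sub (lam.arg) (μ.arg)
      calc |lam.arg - μ.arg| ≤ |lam.arg| + |μ.arg| := abs_sub _ _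
        _ ≤ (Real.pi - θ) + θ₀ := add_le_add hargl hargμ
        _ = Real.pi - (θ - θ₀) := by ring
    have hcos : -b ≤ Real.cos (lam.arg - μ.arg) := by
      have h5 : Real.cos (Real.pi - (θ - θ₀)) ≤ Real.cos |lam.arg - μ.arg| :=
        Real.cos_le_cos_of_nonneg_of_le_pi (abs_nonneg _) (by linarith) habs
      rw [Real.cos_pi_sub, Real.cos_abs] at h5
      have : -b ≤ -Real.cos (θ - θ₀) := neg_le_neg (le_abs_self _)
      linarith
    -- key squared inequality
    have hsq : (1 - b) / 2 * (l + m) ^ 2 ≤ Complex.normSq (lam + μ) := by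
      rw [Complex.normSq_add, hre, ← Complex.sq_norm, ← Complex.sq_norm, ← hl, ← hm]
      nlinarith [mul_nonneg hl0 hm0, sq_nonneg (l - m)]
    calc Real.sqrt ((1 - b) / 2) * (l + m)
        = Real.sqrt ((1 - b) / 2 * (l + m) ^ 2) := by
          rw [Real.sqrt_mul hε0, Real.sqrt_sq (by linarith)]
      _ ≤ Real.sqrt (Complex.normSq (lam + μ)) := Real.sqrt_le_sqrt hsq
      _ = ‖lam + μ‖ := (Complex.norm_def _).symm
end
end
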